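/- For n ≥ 1, the minimum forcing number of the prism over an odd cycle, G = C_{2n+1} □ K₂, equals ⌈(2n+1)/3⌉: there exists a perfect matching M with f(G,M) = ⌈(2n+1)/3⌉ and every perfect matching M' satisfies f(G,M') ≥ ⌈(2n+1)/3⌉. -/

import Mathlib

open SimpleGraph

variable {V : Type*}

/-- `M` is a perfect matching of `G`, given as a set of edges: every vertex is
incident with exactly one edge of `M`. -/
def IsPM (G : SimpleGraph V) (M : Set (Sym2 V)) : Prop :=
  M ⊆ G.edgeSet ∧ ∀ v : V, ∃! e, e ∈ M ∧ v ∈ e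

/-- The set of endpoints of a set of edges. -/
def edgeVerts (C : Set (Sym2 V)) : Set V := {v | ∃ e ∈ C, v ∈ e}

/-- `C` is the edge set of a cycle of `G`: nonempty, every vertex it covers lies on
exactly two of its edges, and it is connected. -/
def IsCycleSet (G : SimpleGraph V) (C : Set (Sym2 V)) : Prop :=
  C ⊆ G.edgeSet ∧ C.Nonempty ∧
    (∀ v ∈ edgeVerts C, {e | e ∈ C ∧ v ∈ e}.ncard = 2) ∧
    ((SimpleGraph.fromEdgeSet C).induce (edgeVerts C)).Connected

/-- `C` is an `M`-alternating cycle: a cycle whose edges lie alternately in the matching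
`M` and outside of it; for a matching this is equivalent to every vertex of `C` being
covered by an edge of `C ∩ M`. -/
def IsAltCycle (G : SimpleGraph V) (M C : Set (Sym2 V)) : Prop :=
  IsCycleSet G C ∧ ∀ v ∈ edgeVerts C, ∃ e ∈ C ∩ M, v ∈ e

/-- `S` is a forcing set of the perfect matching `M`: `S ⊆ M` and `M` is the unique
perfect matching of `G` containing `S`. -/
def IsForcingSet (G : SimpleGraph V) (M S : Set (Sym2 V)) : Prop :=
  S ⊆ M ∧ ∀ M' : Set (Sym2 V), IsPM G M' → S ⊆ M' → M' = M

/-- The forcing number `f(G,M)`: the minimum size of a forcing set of `M`. -/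
noncomputable def forcingNumber (G : SimpleGraph V) (M : Set (Sym2 V)) : ℕ :=
  sInf {n | ∃ S : Set (Sym2 V), IsForcingSet G M S ∧ S.ncard = n}

/-- The prism over the odd cycle: `C_{2n+1} □ K₂`. -/
def prism (n : ℕ) : SimpleGraph (ZMod (2*n+1) × Bool) :=
  SimpleGraph.fromRel (fun x y => (x.1 = y.1 ∧ x.2 ≠ y.2) ∨ (x.2 = y.2 ∧ y.1 = x.1 + 1))

namespace Stmt17

abbrev Z (n : ℕ) := ZMod (2*n+1)

def rung {n : ℕ} (c : Z n) : Sym2 (Z n × Bool) := s((c, false), (c, true))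
def lay {n : ℕ} (c : Z n) (b : Bool) : Sym2 (Z n × Bool) := s((c, b), (c+1, b))

variable {n : ℕ}

instance : NeZero (2*n+1) := ⟨by omega⟩

lemma cast_ne_zero (hn : 1 ≤ n) {k : ℕ} (h1 : 0 < k) (h2 : k < 2*n+1) : (k : Z n) ≠ 0 := by
  intro h
  have := ZMod.val_cast_of_lt (n := 2*n+1) h2
  rw [h, ZMod.val_zero] at this
  omega

lemma one_ne_zero' (hn : 1 ≤ n) : (1 : Z n) ≠ 0 := by
  have := cast_ne_zero (n := n) hn (k := 1) (by norm_num) (by omega)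
  simpa using this

lemma two_ne_zero' (hn : 1 ≤ n) : (2 : Z n) ≠ 0 := by
  have := cast_ne_zero (n := n) hn (k := 2) (by norm_num) (by omega)
  simpa using this

lemma succ_ne_self (hn : 1 ≤ n) (c : Z n) : c + 1 ≠ c := by
  intro h
  exact one_ne_zero' hn (by linear_combination h)

lemma mem_rung {x : Z n × Bool} {c : Z n} : x ∈ rung c ↔ x = (c, false) ∨ x = (c, true) := by
  simp [rung]

lemma mem_lay {x : Z n × Bool} {c : Z n} {b : Bool} :
    x ∈ lay c b ↔ x = (c, b) ∨ x = (c+1, b) := by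
  simp [lay]

lemma rung_inj {c c' : Z n} : rung c = rung c' ↔ c = c' := by
  constructor
  · intro h
    rw [rung, rung, Sym2.eq_iff] at h
    rcases h with ⟨h, -⟩ | ⟨h, -⟩ <;> exact (Prod.ext_iff.mp h).1
  · rintro rfl; rfl

lemma rung_ne_lay {c c' : Z n} {b : Bool} : rung c ≠ lay c' b := by
  intro h
  rw [rung, lay, Sym2.eq_iff] at h
  rcases h with ⟨h1, h2⟩ | ⟨h1, h2⟩ <;>
    simp [Prod.ext_iff] at h1 h2 <;> simp [h1.2] at h2

lemma lay_eq_lay (hn : 1 ≤ n) {c c' : Z n} {b b' : Bool} :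
    lay c b = lay c' b' ↔ c = c' ∧ b = b' := by
  constructor
  · intro h
    rw [lay, lay, Sym2.eq_iff] at h
    rcases h with ⟨h1, h2⟩ | ⟨h1, h2⟩ <;>
      rw [Prod.ext_iff] at h1 h2
    · exact ⟨h1.1, h1.2⟩
    · exfalso
      apply two_ne_zero' hn
      linear_combination h2.1 - h1.1
  · rintro ⟨rfl, rfl⟩; rfl

lemma rung_mem_edgeSet (c : Z n) : rung c ∈ (prism n).edgeSet := by
  rw [rung, SimpleGraph.mem_edgeSet, prism, fromRel_adj]
  refine ⟨by simp, Or.inl (Or.inl ⟨rfl, by simp⟩)⟩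

lemma lay_mem_edgeSet (hn : 1 ≤ n) (c : Z n) (b : Bool) : lay c b ∈ (prism n).edgeSet := by
  rw [lay, SimpleGraph.mem_edgeSet, prism, fromRel_adj]
  refine ⟨?_, Or.inl (Or.inr ⟨rfl, rfl⟩)⟩
  simp only [ne_eq, Prod.mk.injEq, not_and]
  intro h; exact absurd h.symm (succ_ne_self hn c)

lemma edge_cases (hn : 1 ≤ n) {e : Sym2 (Z n × Bool)} (he : e ∈ (prism n).edgeSet)
    {x : Z n × Bool} (hx : x ∈ e) :
    e = rung x.1 ∨ e = lay x.1 x.2 ∨ e = lay (x.1 - 1) x.2 := by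
  obtain ⟨y, rfl⟩ := Sym2.mem_iff_exists.mp hx
  rw [SimpleGraph.mem_edgeSet, prism, fromRel_adj] at he
  obtain ⟨x1, x2⟩ := x
  obtain ⟨y1, y2⟩ := y
  obtain ⟨hne, h | h⟩ := he <;> simp only [] at h <;>
    rcases h with ⟨h1, h2⟩ | ⟨h1, h2⟩
  · subst h1
    cases x2 <;> cases y2
    · exact absurd rfl h2
    · left; rfl
    · left; exact Sym2.eq_swap
    · exact absurd rfl h2
  · subst h1; subst h2
    right; left; rfl
  · subst h1
    cases x2 <;> cases y2
    · exact absurd rfl h2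
    · left; rfl
    · left; exact Sym2.eq_swap
    · exact absurd rfl h2
  · have hy1 : y1 = x1 - 1 := by rw [h2]; ring
    subst hy1; subst h1
    right; right
    have e1 : x1 - 1 + 1 = x1 := by ring
    rw [lay, e1]
    exact Sym2.eq_swap

section PM

variable {M : Set (Sym2 (Z n × Bool))}

lemma pm_unique (hM : IsPM (prism n) M) {e₁ e₂ : Sym2 (Z n × Bool)} {x : Z n × Bool}
    (h₁ : e₁ ∈ M) (h₂ : e₂ ∈ M) (hx₁ : x ∈ e₁) (hx₂ : x ∈ e₂) : e₁ = e₂ := by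
  obtain ⟨e, -, hu⟩ := hM.2 x
  rw [hu e₁ ⟨h₁, hx₁⟩, hu e₂ ⟨h₂, hx₂⟩]

lemma pm_cases (hn : 1 ≤ n) (hM : IsPM (prism n) M) (x : Z n × Bool) :
    rung x.1 ∈ M ∨ lay x.1 x.2 ∈ M ∨ lay (x.1 - 1) x.2 ∈ M := by
  obtain ⟨e, ⟨heM, hex⟩, -⟩ := hM.2 x
  rcases edge_cases hn (hM.1 heM) hex with h | h | h
  · left; rwa [← h]
  · right; left; rwa [← h]
  · right; right; rwa [← h]

lemma lay_rung_left (hM : IsPM (prism n) M) {c : Z n} {b : Bool}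
    (h : lay c b ∈ M) : rung c ∉ M := by
  intro h'
  have hx1 : (c, b) ∈ rung c := by rw [mem_rung]; cases b <;> simp
  have hx2 : (c, b) ∈ lay c b := by simp [mem_lay]
  exact rung_ne_lay (pm_unique hM h' h hx1 hx2)

lemma lay_rung_right (hM : IsPM (prism n) M) {c : Z n} {b : Bool}
    (h : lay c b ∈ M) : rung (c+1) ∉ M := by
  intro h'
  have hx1 : (c+1, b) ∈ rung (c+1) := by rw [mem_rung]; cases b <;> simp
  have hx2 : (c+1, b) ∈ lay c b := by simp [mem_lay]
  exact rung_ne_lay (pm_unique hM h' h hx1 hx2)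

lemma lay_lay_right (hn : 1 ≤ n) (hM : IsPM (prism n) M) {c : Z n} {b : Bool}
    (h : lay c b ∈ M) : lay (c+1) b ∉ M := by
  intro h'
  have := pm_unique hM h h' (x := (c+1, b)) (by simp [mem_lay]) (by simp [mem_lay])
  rw [lay_eq_lay hn] at this
  exact succ_ne_self hn c this.1.symm

lemma lay_lay_left (hn : 1 ≤ n) (hM : IsPM (prism n) M) {c : Z n} {b : Bool}
    (h : lay c b ∈ M) : lay (c-1) b ∉ M := by
  intro h'
  have hx : (c, b) ∈ lay (c-1) b := by
    rw [mem_lay]; right; rw [sub_add_cancel]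
  have := pm_unique hM h h' (x := (c, b)) (by simp [mem_lay]) hx
  rw [lay_eq_lay hn] at this
  have h2 : c = c - 1 := this.1
  exact one_ne_zero' hn (by linear_combination h2)

lemma rung_lay_here (hM : IsPM (prism n) M) {c : Z n} {b : Bool}
    (h : rung c ∈ M) : lay c b ∉ M := fun h' => lay_rung_left hM h' h

lemma rung_lay_pred (hM : IsPM (prism n) M) {c : Z n} {b : Bool}
    (h : rung c ∈ M) : lay (c-1) b ∉ M := by
  intro h'
  have := lay_rung_right hM h'
  rw [sub_add_cancel] at this
  exact this h

/-- Layer synchronization: matched layer edges come in pairs across the two layers. -/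
lemma sync (hn : 1 ≤ n) (hM : IsPM (prism n) M) {c : Z n} {b : Bool}
    (h : lay c b ∈ M) : lay c (!b) ∈ M := by
  by_contra h'
  have key : ∀ j : ℕ, lay (c + ((2*j : ℕ) : Z n)) b ∈ M ∧ lay (c + ((2*j : ℕ) : Z n) + 1) (!b) ∈ M := by
    intro j
    induction j with
    | zero =>
      constructor
      · simpa using h
      · have h0 : lay (c + ((2*0 : ℕ) : Z n)) b ∈ M := by simpa using h
        rcases pm_cases hn hM (c + ((2*0 : ℕ) : Z n) + 1, !b) with hc | hc | hc
        · exact absurd hc (by push_cast; simpa using lay_rung_right hM h)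
        · exact hc
        · exfalso
          rw [add_sub_cancel_right] at hc
          push_cast at hc
          simp only [add_zero] at hc
          exact h' hc
    | succ j ih =>
      obtain ⟨ih1, ih2⟩ := ih
      have harith : (c + ((2*(j+1) : ℕ) : Z n) : Z n) = c + ((2*j : ℕ) : Z n) + 1 + 1 := by
        push_cast; ring
      have h1 : lay (c + ((2*(j+1) : ℕ) : Z n)) b ∈ M := by
        rcases pm_cases hn hM ((c + ((2*(j+1) : ℕ) : Z n) : Z n), b) with hc | hc | hc
        · exfalso
          rw [harith] at hc
          exact lay_rung_right hM ih2 hc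
        · exact hc
        · exfalso
          rw [harith, add_sub_cancel_right] at hc
          exact lay_lay_right hn hM ih1 hc
      constructor
      · exact h1
      · rcases pm_cases hn hM ((c + ((2*(j+1) : ℕ) : Z n) + 1 : Z n), !b) with hc | hc | hc
        · exfalso
          exact lay_rung_right hM h1 hc
        · exact hc
        · exfalso
          rw [add_sub_cancel_right, harith] at hc
          exact lay_lay_right hn hM ih2 hc
  obtain ⟨hn1, -⟩ := key n
  have hmem : (c, b) ∈ lay (c + ((2*n : ℕ) : Z n)) b := by
    rw [mem_lay]; right
    have : (c + ((2*n : ℕ) : Z n) + 1 : Z n) = c := by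
      have hz : ((2*n+1 : ℕ) : Z n) = 0 := ZMod.natCast_self _
      push_cast at hz ⊢
      linear_combination hz
    rw [this]
  have heq := pm_unique hM hn1 h hmem (by simp [mem_lay])
  rw [lay_eq_lay hn] at heq
  have : ((2*n : ℕ) : Z n) = 0 := by linear_combination heq.1
  exact cast_ne_zero hn (by omega) (by omega) this

/-- A perfect matching contained in another perfect matching equals it. -/
lemma pm_anti {G : SimpleGraph V} {M M' : Set (Sym2 V)}
    (hM : IsPM G M) (hM' : IsPM G M') (h : M ⊆ M') : M' = M := by
  ext e
  constructor
  · intro he'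
    induction e with
    | _ x y =>
      obtain ⟨f, ⟨hfM, hfx⟩, -⟩ := hM.2 x
      have heq : s(x, y) = f := by
        obtain ⟨g, -, hu⟩ := hM'.2 x
        rw [hu _ ⟨he', by simp⟩, hu f ⟨h hfM, hfx⟩]
      rw [heq]; exact hfM
  · exact fun he => h he

lemma pm_unique' {G : SimpleGraph V} {M : Set (Sym2 V)} (hM : IsPM G M)
    {e₁ e₂ : Sym2 V} {x : V}
    (h₁ : e₁ ∈ M) (h₂ : e₂ ∈ M) (hx₁ : x ∈ e₁) (hx₂ : x ∈ e₂) : e₁ = e₂ := by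
  obtain ⟨e, -, hu⟩ := hM.2 x
  rw [hu e₁ ⟨h₁, hx₁⟩, hu e₂ ⟨h₂, hx₂⟩]

/-- Swapping two matching edges for two new edges covering the same vertices. -/
lemma pm_swap {G : SimpleGraph V} {M : Set (Sym2 V)} (hM : IsPM G M)
    {e₁ e₂ f₁ f₂ : Sym2 V} (he₁ : e₁ ∈ M) (he₂ : e₂ ∈ M)
    (hf₁ : f₁ ∈ G.edgeSet) (hf₂ : f₂ ∈ G.edgeSet)
    (hcover : ∀ x, (x ∈ e₁ ∨ x ∈ e₂) ↔ (x ∈ f₁ ∨ x ∈ f₂))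
    (hdisj : ∀ x, x ∈ f₁ → x ∈ f₂ → False) :
    IsPM G (M \ {e₁, e₂} ∪ {f₁, f₂}) := by
  constructor
  · rintro e (⟨heM, -⟩ | he)
    · exact hM.1 heM
    · rcases he with rfl | rfl
      · exact hf₁
      · exact hf₂
  · intro v
    by_cases hv : v ∈ f₁ ∨ v ∈ f₂
    · have hvE : v ∈ e₁ ∨ v ∈ e₂ := (hcover v).mpr hv
      rcases hv with hv | hv
      · refine ⟨f₁, ⟨Or.inr (by simp), hv⟩, ?_⟩
        rintro g ⟨(⟨hgM, hg2⟩ | hg), hgv⟩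
        · exfalso
          apply hg2
          rcases hvE with h | h
          · left; exact pm_unique' hM hgM he₁ hgv h
          · right; exact pm_unique' hM hgM he₂ hgv h
        · rcases hg with rfl | rfl
          · rfl
          · exact absurd (hdisj v hv hgv) (fun h => h)
      · refine ⟨f₂, ⟨Or.inr (by simp), hv⟩, ?_⟩
        rintro g ⟨(⟨hgM, hg2⟩ | hg), hgv⟩
        · exfalso
          apply hg2
          rcases hvE with h | h
          · left; exact pm_unique' hM hgM he₁ hgv h
          · right; exact pm_unique' hM hgM he₂ hgv h
        · rcases hg with rfl | rfl
          · exact absurd (hdisj v hgv hv) (fun h => h)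
          · rfl
    · push_neg at hv
      have hvE : ¬(v ∈ e₁ ∨ v ∈ e₂) := fun h => by
        rcases (hcover v).mp h with h' | h'
        · exact hv.1 h'
        · exact hv.2 h'
      push_neg at hvE
      obtain ⟨g, ⟨hgM, hgv⟩, -⟩ := hM.2 v
      refine ⟨g, ⟨Or.inl ⟨hgM, ?_⟩, hgv⟩, ?_⟩
      · rintro (rfl | rfl)
        · exact hvE.1 hgv
        · exact hvE.2 hgv
      · rintro g' ⟨(⟨hg'M, -⟩ | hg'), hg'v⟩
        · exact pm_unique' hM hg'M hgM hg'v hgv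
        · exfalso
          rcases hg' with rfl | rfl
          · exact hv.1 hg'v
          · exact hv.2 hg'v

section Hit

variable {M S : Set (Sym2 (Z n × Bool))}

lemma cover_lemma (hn : 1 ≤ n) (c : Z n) (x : Z n × Bool) :
    (x ∈ lay c false ∨ x ∈ lay c true) ↔ (x ∈ rung c ∨ x ∈ rung (c+1)) := by
  rw [mem_lay, mem_lay, mem_rung, mem_rung]
  obtain ⟨x1, x2⟩ := x
  cases x2 <;> simp [Prod.ext_iff] <;> tauto

lemma block_hit (hn : 1 ≤ n) (hM : IsPM (prism n) M)
    (hS : IsForcingSet (prism n) M S) {c : Z n} (hb : lay c false ∈ M) :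
    lay c false ∈ S ∨ lay c true ∈ S := by
  by_contra hcon
  push_neg at hcon
  have hb' : lay c true ∈ M := by
    have := sync hn hM hb; simpa using this
  set M' := M \ {lay c false, lay c true} ∪ {rung c, rung (c+1)} with hM'def
  have hPM' : IsPM (prism n) M' :=
    pm_swap hM hb hb' (rung_mem_edgeSet c) (rung_mem_edgeSet (c+1))
      (cover_lemma hn c)
      (fun x hx1 hx2 => by
        rw [mem_rung] at hx1 hx2
        have : c = c + 1 := by
          rcases hx1 with rfl | rfl <;> rcases hx2 with h | h <;>
            exact (Prod.ext_iff.mp h).1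
        exact succ_ne_self hn c this.symm)
  have hSM' : S ⊆ M' := by
    intro x hx
    left
    refine ⟨hS.1 hx, ?_⟩
    rintro (rfl | rfl)
    · exact hcon.1 hx
    · exact hcon.2 hx
  have heq := hS.2 M' hPM' hSM'
  have : rung c ∈ M := by
    rw [← heq]; right; simp
  exact lay_rung_left hM hb this

lemma pair_hit (hn : 1 ≤ n) (hM : IsPM (prism n) M)
    (hS : IsForcingSet (prism n) M S) {c : Z n} (h1 : rung c ∈ M) (h2 : rung (c+1) ∈ M) :
    rung c ∈ S ∨ rung (c+1) ∈ S := by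
  by_contra hcon
  push_neg at hcon
  set M' := M \ {rung c, rung (c+1)} ∪ {lay c false, lay c true} with hM'def
  have hPM' : IsPM (prism n) M' :=
    pm_swap hM h1 h2 (lay_mem_edgeSet hn c false) (lay_mem_edgeSet hn c true)
      (fun x => (cover_lemma hn c x).symm)
      (fun x hx1 hx2 => by
        rw [mem_lay] at hx1 hx2
        rcases hx1 with rfl | rfl <;> rcases hx2 with h | h <;>
          simp [Prod.ext_iff] at h)
  have hSM' : S ⊆ M' := by
    intro x hx
    left
    refine ⟨hS.1 hx, ?_⟩
    rintro (rfl | rfl)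
    · exact hcon.1 hx
    · exact hcon.2 hx
  have heq := hS.2 M' hPM' hSM'
  have : lay c false ∈ M := by
    rw [← heq]; right; simp
  exact lay_rung_left hM this h1

end Hit

section Count

open Classical in
/-- Canonical column of an edge. -/
noncomputable def col {n : ℕ} (s : Sym2 (Z n × Bool)) : Z n :=
  if h : ∃ c b, s = lay c b then h.choose
  else if h : ∃ c, s = rung c then h.choose else 0

lemma col_lay (hn : 1 ≤ n) (c : Z n) (b : Bool) : col (lay c b) = c := by
  rw [col]
  have h : ∃ c' b', lay c b = lay (n := n) c' b' := ⟨c, b, rfl⟩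
  rw [dif_pos h]
  obtain ⟨b', hb'⟩ := h.choose_spec
  exact ((lay_eq_lay hn).mp hb').1.symm

lemma col_rung (hn : 1 ≤ n) (c : Z n) : col (rung c) = c := by
  rw [col]
  have h : ¬ ∃ c' b', rung c = lay (n := n) c' b' := by
    rintro ⟨c', b', h⟩; exact rung_ne_lay h
  rw [dif_neg h]
  have h2 : ∃ c', rung c = rung (n := n) c' := ⟨c, rfl⟩
  rw [dif_pos h2]
  exact (rung_inj.mp h2.choose_spec).symm

variable {M S : Set (Sym2 (Z n × Bool))}

lemma count_lower (hn : 1 ≤ n) (hM : IsPM (prism n) M)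
    (hS : IsForcingSet (prism n) M S) : 2*n+1 ≤ 3 * S.ncard := by
  classical
  set bc : Z n → Sym2 (Z n × Bool) :=
    fun c => if lay c false ∈ S then lay c false else lay c true with hbc
  set pc : Z n → Sym2 (Z n × Bool) :=
    fun c => if rung c ∈ S then rung c else rung (c+1) with hpc
  have hbc_mem : ∀ c, lay c false ∈ M → bc c ∈ S := by
    intro c h
    rcases block_hit hn hM hS h with h' | h'
    · simp [hbc, h']
    · rw [hbc]
      simp only []
      split_ifs with h''
      · exact h''
      · exact h'
  have hpc_mem : ∀ c, rung c ∈ M → rung (c+1) ∈ M → pc c ∈ S := by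
    intro c h1 h2
    rcases pair_hit hn hM hS h1 h2 with h' | h'
    · simp [hpc, h']
    · rw [hpc]
      simp only []
      split_ifs with h''
      · exact h''
      · exact h'
  have hbc_col : ∀ c, col (bc c) = c := by
    intro c
    rw [hbc]
    simp only []
    split_ifs <;> rw [col_lay hn]
  have hpc_col : ∀ c, col (pc c) = c ∨ col (pc c) = c + 1 := by
    intro c
    rw [hpc]
    simp only []
    split_ifs <;> rw [col_rung hn] <;> simp
  set g : Z n → Sym2 (Z n × Bool) := fun c =>
    if lay c false ∈ M then bc c
    else if lay (c-1) false ∈ M then bc (c-1)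
    else if rung (c+1) ∈ M then pc c
    else bc (c+1) with hg
  have hg_mem : ∀ c, g c ∈ S := by
    intro c
    rw [hg]
    simp only []
    split_ifs with h1 h2 h3
    · exact hbc_mem c h1
    · exact hbc_mem _ h2
    · have hr : rung c ∈ M := by
        rcases pm_cases hn hM (c, false) with h | h | h
        · exact h
        · exact absurd h h1
        · exact absurd h h2
      exact hpc_mem c hr h3
    · have hb : lay (c+1) false ∈ M := by
        rcases pm_cases hn hM (c+1, false) with h | h | h
        · exact absurd h h3
        · exact h
        · rw [add_sub_cancel_right] at h
          exact absurd h h1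
      exact hbc_mem _ hb
  have hg_col : ∀ c, c = col (g c) ∨ c = col (g c) + 1 ∨ c = col (g c) - 1 := by
    intro c
    rw [hg]
    simp only []
    split_ifs with h1 h2 h3
    · left; rw [hbc_col]
    · right; left; rw [hbc_col, sub_add_cancel]
    · rcases hpc_col c with h | h
      · left; rw [h]
      · right; right; rw [h, add_sub_cancel_right]
    · right; right; rw [hbc_col, add_sub_cancel_right]
  -- counting
  have hcard : (Finset.univ : Finset (Z n)).card ≤ 3 * (Finset.univ.image g).card := by
    apply Finset.card_le_mul_card_image
    intro s hs
    have hsub : Finset.univ.filter (fun c => g c = s) ⊆ {col s, col s + 1, col s - 1} := by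
      intro c hc
      rw [Finset.mem_filter] at hc
      have := hg_col c
      rw [hc.2] at this
      simpa [Finset.mem_insert] using this
    calc (Finset.univ.filter (fun c => g c = s)).card
        ≤ ({col s, col s + 1, col s - 1} : Finset (Z n)).card := Finset.card_le_card hsub
      _ ≤ 3 := by
          apply le_trans (Finset.card_insert_le _ _)
          have := Finset.card_insert_le (col s + 1) ({col s - 1} : Finset (Z n))
          simp at this ⊢
          omega
  have himg : Finset.univ.image g ⊆ S.toFinite.toFinset := by
    intro s hs
    rw [Finset.mem_image] at hs
    obtain ⟨c, -, rfl⟩ := hs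
    rw [Set.Finite.mem_toFinset]
    exact hg_mem c
  have h1 : (Finset.univ : Finset (Z n)).card = 2*n+1 := by
    rw [Finset.card_univ, ZMod.card]
  have h2 : S.toFinite.toFinset.card = S.ncard := (Set.ncard_eq_toFinset_card S S.toFinite).symm
  have h3 := Finset.card_le_card himg
  rw [h1] at hcard
  rw [h2] at h3
  omega

end Count

section Witness

/-- Rung columns of the witness matching. -/
def isR (n : ℕ) (c : Z n) : Prop :=
  if (2*n+1) % 3 = 0 then c.val % 3 = 2 else (c.val = 0 ∨ c.val % 3 = 1)

/-- Block-start columns of the witness matching. -/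
def isB (n : ℕ) (c : Z n) : Prop :=
  if (2*n+1) % 3 = 0 then c.val % 3 = 0 else c.val % 3 = 2

/-- The witness perfect matching. -/
def M0 (n : ℕ) : Set (Sym2 (Z n × Bool)) :=
  {e | (∃ c, isR n c ∧ e = rung c) ∨ (∃ c b, isB n c ∧ e = lay c b)}

/-- The witness forcing set. -/
def S0 (n : ℕ) : Set (Sym2 (Z n × Bool)) :=
  {e | (∃ c, isB n c ∧ e = lay c false) ∨ ((2*n+1) % 3 ≠ 0 ∧ e = rung 0)}

lemma val_succ (hn : 1 ≤ n) (c : Z n) :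
    ((c+1).val = c.val + 1 ∧ c.val < 2*n) ∨ (c.val = 2*n ∧ (c+1).val = 0) := by
  haveI : Fact (1 < 2*n+1) := ⟨by omega⟩
  have hv : c.val < 2*n+1 := ZMod.val_lt c
  have h1 : (c+1).val = (c.val + 1) % (2*n+1) := by
    rw [ZMod.val_add, ZMod.val_one]
  by_cases h : c.val < 2*n
  · left
    rw [h1, Nat.mod_eq_of_lt (by omega)]
    exact ⟨rfl, h⟩
  · right
    have : c.val = 2*n := by omega
    rw [h1, this]
    simp

lemma val_pred (hn : 1 ≤ n) (c : Z n) :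
    ((c-1).val = c.val - 1 ∧ 1 ≤ c.val) ∨ (c.val = 0 ∧ (c-1).val = 2*n) := by
  have hv : c.val < 2*n+1 := ZMod.val_lt c
  have hc : (c - 1 : Z n) = c + ((2*n : ℕ) : Z n) := by
    have hz := ZMod.natCast_self (2*n+1)
    push_cast at hz ⊢
    linear_combination -hz
  have h1 : (c-1).val = (c.val + 2*n) % (2*n+1) := by
    rw [hc, ZMod.val_add, ZMod.val_natCast, Nat.mod_eq_of_lt (show 2*n < 2*n+1 by omega)]
  by_cases h : c.val = 0
  · right
    refine ⟨h, ?_⟩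
    rw [h1, h, zero_add]
    exact Nat.mod_eq_of_lt (by omega)
  · left
    rw [h1, show c.val + 2*n = (c.val - 1) + 1*(2*n+1) by omega, Nat.add_mul_mod_self_right,
      Nat.mod_eq_of_lt (by omega)]
    exact ⟨rfl, by omega⟩

lemma rung_mem_M0 {c : Z n} : rung c ∈ M0 n ↔ isR n c := by
  constructor
  · rintro (⟨c', h, he⟩ | ⟨c', b', h, he⟩)
    · rwa [rung_inj.mp he]
    · exact absurd he rung_ne_lay
  · intro h; exact Or.inl ⟨c, h, rfl⟩

lemma lay_mem_M0 (hn : 1 ≤ n) {c : Z n} {b : Bool} : lay c b ∈ M0 n ↔ isB n c := by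
  constructor
  · rintro (⟨c', h, he⟩ | ⟨c', b', h, he⟩)
    · exact absurd he.symm rung_ne_lay
    · rwa [((lay_eq_lay hn).mp he).1]
  · intro h; exact Or.inr ⟨c, b, h, rfl⟩

/-- Trichotomy of column types for the witness matching. -/
lemma tri (hn : 1 ≤ n) (c : Z n) :
    (isR n c ∧ ¬isB n c ∧ ¬isB n (c-1)) ∨ (¬isR n c ∧ isB n c ∧ ¬isB n (c-1)) ∨
      (¬isR n c ∧ ¬isB n c ∧ isB n (c-1)) := by
  have hv : c.val < 2*n+1 := ZMod.val_lt c
  rcases val_pred hn c with ⟨h1, h2⟩ | ⟨h1, h2⟩ <;>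
    · unfold isR isB
      split_ifs with h3 <;> omega

lemma M0_PM (hn : 1 ≤ n) : IsPM (prism n) (M0 n) := by
  constructor
  · rintro e (⟨c, -, rfl⟩ | ⟨c, b, -, rfl⟩)
    · exact rung_mem_edgeSet c
    · exact lay_mem_edgeSet hn c b
  · rintro ⟨c, b⟩
    have huniq : ∀ {f : Sym2 (Z n × Bool)}, f ∈ M0 n → (c, b) ∈ f →
        (isR n c ∧ f = rung c) ∨ (isB n c ∧ f = lay c b) ∨ (isB n (c-1) ∧ f = lay (c-1) b) := by
      rintro f (⟨a, ha, rfl⟩ | ⟨a, b', ha, rfl⟩) hmem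
      · rw [mem_rung] at hmem
        have hac : c = a := by
          rcases hmem with h | h <;> · rw [Prod.mk.injEq] at h; exact h.1
        subst hac
        exact Or.inl ⟨ha, rfl⟩
      · rw [mem_lay] at hmem
        rcases hmem with h | h
        · rw [Prod.mk.injEq] at h
          obtain ⟨h1, h2⟩ := h
          subst h1; subst h2
          exact Or.inr (Or.inl ⟨ha, rfl⟩)
        · rw [Prod.mk.injEq] at h
          obtain ⟨h1, h2⟩ := h
          have ha1 : a = c - 1 := by rw [h1]; ring
          subst ha1; subst h2
          exact Or.inr (Or.inr ⟨ha, rfl⟩)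
    rcases tri hn c with ⟨hR, hB, hP⟩ | ⟨hR, hB, hP⟩ | ⟨hR, hB, hP⟩
    · refine ⟨rung c, ⟨rung_mem_M0.mpr hR, by rw [mem_rung]; cases b <;> simp⟩, ?_⟩
      rintro f ⟨hf, hmem⟩
      rcases huniq hf hmem with ⟨-, h⟩ | ⟨h, -⟩ | ⟨h, -⟩
      · exact h
      · exact absurd h hB
      · exact absurd h hP
    · refine ⟨lay c b, ⟨lay_mem_M0 hn |>.mpr hB, by rw [mem_lay]; left; rfl⟩, ?_⟩
      rintro f ⟨hf, hmem⟩
      rcases huniq hf hmem with ⟨h, -⟩ | ⟨-, h⟩ | ⟨h, -⟩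
      · exact absurd h hR
      · exact h
      · exact absurd h hP
    · refine ⟨lay (c-1) b, ⟨lay_mem_M0 hn |>.mpr hP, by rw [mem_lay]; right; rw [sub_add_cancel]⟩, ?_⟩
      rintro f ⟨hf, hmem⟩
      rcases huniq hf hmem with ⟨h, -⟩ | ⟨h, -⟩ | ⟨-, h⟩
      · exact absurd h hR
      · exact absurd h hB
      · exact h

lemma S0_sub (hn : 1 ≤ n) : S0 n ⊆ M0 n := by
  rintro e (⟨c, h, rfl⟩ | ⟨h3, rfl⟩)
  · exact Or.inr ⟨c, false, h, rfl⟩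
  · apply rung_mem_M0.mpr
    unfold isR
    rw [if_neg h3]
    left
    exact ZMod.val_zero

lemma isR_succ (hn : 1 ≤ n) {c : Z n} (hc : isR n c) (h0 : (2*n+1) % 3 = 0 ∨ c.val ≠ 0) :
    isB n (c+1) ∨ ((c+1) = 0 ∧ (2*n+1) % 3 ≠ 0) := by
  have hv := ZMod.val_lt c
  unfold isR at hc
  rcases val_succ hn c with ⟨h1, h2⟩ | ⟨h1, h2⟩
  · left
    unfold isB
    split_ifs at hc ⊢ with h3 <;> omega
  · by_cases h3 : (2*n+1) % 3 = 0
    · left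
      unfold isB
      rw [if_pos h3, h2]
    · right
      exact ⟨(ZMod.val_eq_zero _).mp h2, h3⟩

lemma isR_pred2 (hn : 1 ≤ n) {c : Z n} (hc : isR n c) (h0 : (2*n+1) % 3 = 0 ∨ c.val ≠ 0) :
    isB n (c-1-1) ∨ ((c-1) = 0 ∧ (2*n+1) % 3 ≠ 0) := by
  have hv := ZMod.val_lt c
  have hv1 := ZMod.val_lt (c-1)
  rcases val_pred hn c with ⟨h1, h2⟩ | ⟨h1, h2⟩
  · by_cases hz : (c-1).val = 0
    · right
      refine ⟨(ZMod.val_eq_zero _).mp hz, ?_⟩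
      intro h3
      unfold isR at hc
      rw [if_pos h3] at hc
      omega
    · left
      rcases val_pred hn (c-1) with ⟨g1, g2⟩ | ⟨g1, g2⟩
      · unfold isR at hc
        unfold isB
        split_ifs at hc ⊢ with h3 <;> omega
      · omega
  · unfold isR at hc
    split_ifs at hc with h3 <;> omega

lemma S0_forces (hn : 1 ≤ n) : IsForcingSet (prism n) (M0 n) (S0 n) := by
  refine ⟨S0_sub hn, ?_⟩
  intro M' hM' hsub
  apply pm_anti (M0_PM hn) hM'
  rintro e (⟨c, hc, rfl⟩ | ⟨c, b, hc, rfl⟩)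
  · -- rung edges
    by_cases hzero : (2*n+1) % 3 ≠ 0 ∧ c = 0
    · rw [hzero.2]
      exact hsub (Or.inr ⟨hzero.1, rfl⟩)
    · have h0 : (2*n+1) % 3 = 0 ∨ c.val ≠ 0 := by
        by_cases h3 : (2*n+1) % 3 = 0
        · exact Or.inl h3
        · right
          intro hv0
          exact hzero ⟨h3, (ZMod.val_eq_zero c).mp hv0⟩
      have hE1 := isR_succ hn hc h0
      have hE2 := isR_pred2 hn hc h0
      have hnot1 : lay c false ∉ M' := by
        intro hl
        rcases hE1 with hB | ⟨h00, h3⟩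
        · have hb : lay (c+1) false ∈ M' := hsub (Or.inl ⟨c+1, hB, rfl⟩)
          have := pm_unique' hM' hl hb (x := (c+1, false)) (by simp [mem_lay]) (by simp [mem_lay])
          rw [lay_eq_lay hn] at this
          exact succ_ne_self hn c this.1.symm
        · have hr : rung 0 ∈ M' := hsub (Or.inr ⟨h3, rfl⟩)
          have := pm_unique' hM' hr hl (x := (c+1, false))
            (by rw [h00, mem_rung]; simp) (by simp [mem_lay])
          exact rung_ne_lay this
      have hnot2 : lay (c-1) false ∉ M' := by
        intro hl
        rcases hE2 with hB | ⟨h00, h3⟩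
        · have hb : lay (c-1-1) false ∈ M' := hsub (Or.inl ⟨c-1-1, hB, rfl⟩)
          have := pm_unique' hM' hl hb (x := (c-1, false)) (by simp [mem_lay])
            (by rw [mem_lay]; right; rw [sub_add_cancel])
          rw [lay_eq_lay hn] at this
          exact one_ne_zero' hn (by linear_combination this.1)
        · have hr : rung 0 ∈ M' := hsub (Or.inr ⟨h3, rfl⟩)
          have := pm_unique' hM' hr hl (x := (c-1, false))
            (by rw [h00, mem_rung]; simp) (by simp [mem_lay])
          exact rung_ne_lay this
      rcases pm_cases hn hM' (c, false) with h | h | h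
      · exact h
      · exact absurd h hnot1
      · exact absurd h hnot2
  · -- layer edges
    have h0 : lay c false ∈ M' := hsub (Or.inl ⟨c, hc, rfl⟩)
    cases b
    · exact h0
    · simpa using sync hn hM' h0

lemma count_filter (hn : 1 ≤ n) (off : ℕ) (hoff : off < 3) :
    (Finset.univ.filter (fun c : Z n => c.val % 3 = off)).card = (2*n+1+2-off)/3 := by
  classical
  rw [show (2*n+1+2-off)/3 = (Finset.range ((2*n+1+2-off)/3)).card from (Finset.card_range _).symm]
  apply Finset.card_bij' (i := fun c _ => (c.val - off)/3)
    (j := fun t _ => ((3*t + off : ℕ) : Z n))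
  · intro c hc
    rw [Finset.mem_filter] at hc
    obtain ⟨-, hc⟩ := hc
    have hv := ZMod.val_lt c
    rw [Finset.mem_range]
    omega
  · intro t ht
    rw [Finset.mem_range] at ht
    rw [Finset.mem_filter]
    refine ⟨Finset.mem_univ _, ?_⟩
    rw [ZMod.val_cast_of_lt (by omega)]
    omega
  · intro c hc
    rw [Finset.mem_filter] at hc
    obtain ⟨-, hc⟩ := hc
    have hv := ZMod.val_lt c
    have harith : 3*((c.val - off)/3) + off = c.val := by omega
    rw [harith]
    exact ZMod.natCast_rightInverse c
  · intro t ht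
    rw [Finset.mem_range] at ht
    rw [ZMod.val_cast_of_lt (by omega)]
    omega

lemma S0_card (hn : 1 ≤ n) : (S0 n).ncard = (2*n+1+2)/3 := by
  classical
  have hinj : Set.InjOn (fun c : Z n => lay c false) {c : Z n | isB n c} :=
    fun c _ c' _ h => ((lay_eq_lay hn).mp h).1
  by_cases h3 : (2*n+1) % 3 = 0
  · have hBcard : ({c : Z n | isB n c} : Set (Z n)).ncard = (2*n+1+2)/3 := by
      have hset : ({c : Z n | isB n c} : Set (Z n)) =
          ↑(Finset.univ.filter (fun c : Z n => c.val % 3 = 0)) := by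
        ext c
        simp [isB, h3]
      rw [hset, Set.ncard_coe_finset, count_filter hn 0 (by omega)]
      omega
    have hS0 : S0 n = (fun c : Z n => lay c false) '' {c : Z n | isB n c} := by
      ext e
      constructor
      · rintro (⟨c, hc, rfl⟩ | ⟨hne, rfl⟩)
        · exact ⟨c, hc, rfl⟩
        · exact absurd h3 hne
      · rintro ⟨c, hc, rfl⟩
        exact Or.inl ⟨c, hc, rfl⟩
    rw [hS0, Set.ncard_image_of_injOn hinj, hBcard]
  · have hBcard : ({c : Z n | isB n c} : Set (Z n)).ncard = (2*n+1)/3 := by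
      have hset : ({c : Z n | isB n c} : Set (Z n)) =
          ↑(Finset.univ.filter (fun c : Z n => c.val % 3 = 2)) := by
        ext c
        simp [isB, h3]
      rw [hset, Set.ncard_coe_finset, count_filter hn 2 (by omega)]
      omega
    have hS0 : S0 n = insert (rung 0) ((fun c : Z n => lay c false) '' {c : Z n | isB n c}) := by
      ext e
      constructor
      · rintro (⟨c, hc, rfl⟩ | ⟨hne, rfl⟩)
        · exact Set.mem_insert_of_mem _ ⟨c, hc, rfl⟩
        · exact Set.mem_insert _ _
      · rintro (rfl | ⟨c, hc, rfl⟩)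
        · exact Or.inr ⟨h3, rfl⟩
        · exact Or.inl ⟨c, hc, rfl⟩
    rw [hS0, Set.ncard_insert_of_notMem (by
      rintro ⟨c, -, h⟩
      exact rung_ne_lay h.symm)]
    rw [Set.ncard_image_of_injOn hinj, hBcard]
    omega

lemma lb_all (hn : 1 ≤ n) {M : Set (Sym2 (Z n × Bool))} (hM : IsPM (prism n) M) :
    (2*n+1+2)/3 ≤ forcingNumber (prism n) M := by
  have hne : {m | ∃ S, IsForcingSet (prism n) M S ∧ S.ncard = m}.Nonempty :=
    ⟨M.ncard, M, ⟨subset_rfl, fun M' h h' => pm_anti hM h h'⟩, rfl⟩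
  obtain ⟨S, hS, hc⟩ := Nat.sInf_mem hne
  have hcount := count_lower hn hM hS
  rw [forcingNumber, ← hc]
  omega

end Witness

end PM

end Stmt17

/-- the minimum forcing number of `C_{2n+1} □ K₂` equals `⌈(2n+1)/3⌉`
(written here as `(2n+3)/3` in natural division): some perfect matching attains it and
every perfect matching has forcing number at least this value. -/
theorem stmt_17 (n : ℕ) (hn : 1 ≤ n) :
    (∃ M : Set (Sym2 (ZMod (2*n+1) × Bool)), IsPM (prism n) M ∧
        forcingNumber (prism n) M = (2*n+1+2)/3) ∧
    ∀ M : Set (Sym2 (ZMod (2*n+1) × Bool)), IsPM (prism n) M →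
        (2*n+1+2)/3 ≤ forcingNumber (prism n) M := by
  constructor
  · refine ⟨Stmt17.M0 n, Stmt17.M0_PM hn, ?_⟩
    apply le_antisymm
    · apply Nat.sInf_le
      exact ⟨Stmt17.S0 n, Stmt17.S0_forces hn, Stmt17.S0_card hn⟩
    · exact Stmt17.lb_all hn (Stmt17.M0_PM hn)
  · intro M hM
    exact Stmt17.lb_all hn hM
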